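/- For every complex number s with Re(s) > 1, the Dirichlet series ∑ 1/kˢ, taken over positive integers k with gcd(k, 3) = 1 and τ(k) not divisible by 3, equals (ζ(s)·ζ(3s)/ζ(2s)) · (1 − 27^{−s})/(1 + 3^{−s}). -/

import Mathlib

open ArithmeticFunction Finset LSeries
open scoped LSeries.notation ArithmeticFunction.zeta

namespace Tau3Aux

open scoped Classical in
noncomputable def Fc : ArithmeticFunction ℂ :=
  ⟨fun k => if Nat.gcd k 3 = 1 ∧ ¬ (3 ∣ k.divisors.card) then 1 else 0, by simp⟩

open scoped Classical in
noncomputable def pw (r : ℕ) : ArithmeticFunction ℂ :=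
  ⟨fun n => if n ≠ 0 ∧ ∃ m, n = m ^ r then 1 else 0, by simp⟩

open scoped Classical in
noncomputable def tt : ArithmeticFunction ℂ :=
  ⟨fun n => if n = 1 ∨ n = 3 then 1 else 0, by simp⟩

open scoped Classical in
noncomputable def uu : ArithmeticFunction ℂ :=
  ⟨fun n => if n = 1 then 1 else if n = 27 then -1 else 0, by simp⟩

open scoped Classical

lemma Fc_apply (k : ℕ) :
    Fc k = if Nat.gcd k 3 = 1 ∧ ¬ (3 ∣ k.divisors.card) then 1 else 0 := by
  simp [Fc]

lemma pw_apply (r n : ℕ) : pw r n = if n ≠ 0 ∧ ∃ m, n = m ^ r then 1 else 0 := by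
  simp [pw]

lemma tt_apply (n : ℕ) : tt n = if n = 1 ∨ n = 3 then 1 else 0 := by simp [tt]

lemma uu_apply (n : ℕ) : uu n = if n = 1 then 1 else if n = 27 then -1 else 0 := by
  simp [uu]

lemma pw_mult (r : ℕ) : (pw r).IsMultiplicative := by
  constructor
  · rw [pw_apply, if_pos ⟨one_ne_zero, 1, (one_pow r).symm⟩]
  · intro m n h
    simp only [pw_apply]
    rcases eq_or_ne m 0 with rfl | hm
    · simp
    rcases eq_or_ne n 0 with rfl | hn
    · simp
    have hmn0 : m * n ≠ 0 := mul_ne_zero hm hn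
    by_cases hsq : ∃ k, m * n = k ^ r
    · obtain ⟨k, hk⟩ := hsq
      have h1 : ∃ a, m = a ^ r :=
        exists_eq_pow_of_mul_eq_pow (Nat.isUnit_iff.mpr h) hk
      have h2 : ∃ b, n = b ^ r :=
        exists_eq_pow_of_mul_eq_pow (Nat.isUnit_iff.mpr (Nat.coprime_comm.mp h))
          (by rwa [mul_comm])
      rw [if_pos ⟨hmn0, k, hk⟩, if_pos ⟨hm, h1⟩, if_pos ⟨hn, h2⟩, one_mul]
    · have hnot : ¬ ((m ≠ 0 ∧ ∃ a, m = a ^ r) ∧ (n ≠ 0 ∧ ∃ b, n = b ^ r)) := by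
        rintro ⟨⟨-, a, rfl⟩, ⟨-, b, rfl⟩⟩
        exact hsq ⟨a * b, (mul_pow a b r).symm⟩
      rw [if_neg (fun hh : (m * n ≠ 0 ∧ ∃ k, m * n = k ^ r) => hsq hh.2)]
      by_cases h1 : m ≠ 0 ∧ ∃ a, m = a ^ r
      · rw [if_neg (fun h2 => hnot ⟨h1, h2⟩), mul_zero]
      · rw [if_neg h1, zero_mul]

lemma Fc_mult : Fc.IsMultiplicative := by
  constructor
  · rw [Fc_apply, if_pos (by simp)]
  · intro m n h
    rcases eq_or_ne m 0 with rfl | hm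
    · simp [Fc_apply]
    rcases eq_or_ne n 0 with rfl | hn
    · simp [Fc_apply]
    simp only [Fc_apply]
    have hgcd : Nat.gcd (m * n) 3 = 1 ↔ Nat.gcd m 3 = 1 ∧ Nat.gcd n 3 = 1 :=
      Nat.coprime_mul_iff_left
    have hdvd : 3 ∣ (m * n).divisors.card ↔
        3 ∣ m.divisors.card ∨ 3 ∣ n.divisors.card := by
      rw [Nat.Coprime.card_divisors_mul h, Nat.Prime.dvd_mul (by norm_num)]
    have key : (Nat.gcd (m * n) 3 = 1 ∧ ¬ (3 ∣ (m * n).divisors.card)) ↔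
        ((Nat.gcd m 3 = 1 ∧ ¬ (3 ∣ m.divisors.card)) ∧
          (Nat.gcd n 3 = 1 ∧ ¬ (3 ∣ n.divisors.card))) := by
      rw [hgcd, hdvd]; tauto
    rw [if_congr key rfl rfl]
    by_cases h1 : Nat.gcd m 3 = 1 ∧ ¬ (3 ∣ m.divisors.card) <;>
      by_cases h2 : Nat.gcd n 3 = 1 ∧ ¬ (3 ∣ n.divisors.card) <;>
      simp [h1, h2]

lemma tt_mult : tt.IsMultiplicative := by
  constructor
  · rw [tt_apply, if_pos (Or.inl rfl)]
  · intro m n h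
    simp only [tt_apply]
    have e1 : m * n = 1 → m = 1 ∧ n = 1 := by
      intro hmn
      exact ⟨Nat.dvd_one.mp ⟨n, hmn.symm⟩, Nat.dvd_one.mp ⟨m, by rw [mul_comm]; exact hmn.symm⟩⟩
    have e3 : m * n = 3 → (m = 1 ∧ n = 3) ∨ (m = 3 ∧ n = 1) := by
      intro hmn
      have hle : m ≤ 3 := Nat.le_of_dvd (by norm_num) ⟨n, hmn.symm⟩
      interval_cases m <;> omega
    have e9 : m = 3 → n = 3 → False := by
      rintro rfl rfl; simp [Nat.Coprime] at h
    have p11 : m = 1 → n = 1 → m * n = 1 := by rintro rfl rfl; rfl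
    have p13 : m = 1 → n = 3 → m * n = 3 := by rintro rfl rfl; rfl
    have p31 : m = 3 → n = 1 → m * n = 3 := by rintro rfl rfl; rfl
    split_ifs with a b c d e f g i j k l
    all_goals try norm_num
    all_goals exfalso
    all_goals tauto

set_option maxHeartbeats 2000000 in
lemma uu_mult : uu.IsMultiplicative := by
  constructor
  · rw [uu_apply, if_pos rfl]
  · intro m n h
    simp only [uu_apply]
    have e1 : m * n = 1 → m = 1 ∧ n = 1 := by
      intro hmn
      exact ⟨Nat.dvd_one.mp ⟨n, hmn.symm⟩, Nat.dvd_one.mp ⟨m, by rw [mul_comm]; exact hmn.symm⟩⟩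
    have e27 : m * n = 27 → (m = 1 ∧ n = 27) ∨ (m = 27 ∧ n = 1) := by
      intro hmn
      have hle : m ≤ 27 := Nat.le_of_dvd (by norm_num) ⟨n, hmn.symm⟩
      interval_cases m
      all_goals try omega
      · exfalso
        have : n = 9 := by omega
        subst this; simp [Nat.Coprime] at h
      · exfalso
        have : n = 3 := by omega
        subst this; simp [Nat.Coprime] at h
    have e99 : m = 27 → n = 27 → False := by
      rintro rfl rfl; simp [Nat.Coprime] at h
    have p11 : m = 1 → n = 1 → m * n = 1 := by rintro rfl rfl; rfl
    have p13 : m = 1 → n = 27 → m * n = 27 := by rintro rfl rfl; rfl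
    have p31 : m = 27 → n = 1 → m * n = 27 := by rintro rfl rfl; rfl
    split_ifs with a b c d e f g i j k l o q w x y z a1 a2 a3 a4 a5 a6 a7 a8
    all_goals try norm_num
    all_goals exfalso
    all_goals tauto

lemma mul_apply_pp (f g : ArithmeticFunction ℂ) {p : ℕ} (hp : p.Prime) (e : ℕ) :
    (f * g) (p ^ e) = ∑ i ∈ range (e + 1), f (p ^ i) * g (p ^ (e - i)) := by
  rw [ArithmeticFunction.mul_apply,
    Nat.sum_divisorsAntidiagonal (f := fun x y => f x * g y),
    Nat.sum_divisors_prime_pow hp]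
  refine Finset.sum_congr rfl fun i hi => ?_
  rw [Nat.pow_div (Nat.lt_succ_iff.mp (Finset.mem_range.mp hi)) hp.pos]

lemma pow_exists_iff {p : ℕ} (hp : p.Prime) {r : ℕ} (hr : r ≠ 0) (i : ℕ) :
    (∃ m, p ^ i = m ^ r) ↔ r ∣ i := by
  constructor
  · rintro ⟨m, hm⟩
    have hmdvd : m ∣ p ^ i := hm ▸ dvd_pow_self m hr
    obtain ⟨j, hj, rfl⟩ := (Nat.dvd_prime_pow hp).mp hmdvd
    rw [← pow_mul] at hm
    have := Nat.pow_right_injective hp.two_le hm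
    rw [this]
    exact dvd_mul_left r j
  · rintro ⟨c, rfl⟩
    exact ⟨p ^ c, by rw [mul_comm, pow_mul]⟩

lemma pw_pp {p : ℕ} (hp : p.Prime) {r : ℕ} (hr : r ≠ 0) (i : ℕ) :
    pw r (p ^ i) = if r ∣ i then 1 else 0 := by
  rw [pw_apply]
  have h1 : (p ^ i ≠ 0 ∧ ∃ m, p ^ i = m ^ r) ↔ r ∣ i := by
    rw [and_iff_right (pow_ne_zero i hp.pos.ne'), pow_exists_iff hp hr]
  rw [if_congr h1 rfl rfl]

lemma Fc_pp {p : ℕ} (hp : p.Prime) (i : ℕ) :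
    Fc (p ^ i) = if (p = 3 → i = 0) ∧ i % 3 ≠ 2 then 1 else 0 := by
  have hcard : (p ^ i).divisors.card = i + 1 := by
    rw [Nat.divisors_prime_pow hp, Finset.card_map, Finset.card_range]
  have hdvd : (3 ∣ (p ^ i).divisors.card) ↔ i % 3 = 2 := by rw [hcard]; omega
  have hgcd : Nat.gcd (p ^ i) 3 = 1 ↔ (p = 3 → i = 0) := by
    constructor
    · intro hg hp3
      by_contra hi
      have h3 : (3 : ℕ) ∣ Nat.gcd (p ^ i) 3 :=
        Nat.dvd_gcd (hp3 ▸ dvd_pow_self p hi) dvd_rfl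
      rw [hg] at h3
      omega
    · intro him
      by_cases hp3 : p = 3
      · rw [him hp3, pow_zero]
        rfl
      · exact Nat.Coprime.pow_left i ((Nat.coprime_primes hp (by norm_num)).mpr hp3)
  rw [Fc_apply, if_congr (by rw [hgcd, hdvd]) rfl rfl]

lemma tt_pp_ne3 {p : ℕ} (hp : p.Prime) (hp3 : p ≠ 3) (j : ℕ) :
    tt (p ^ j) = if j = 0 then 1 else 0 := by
  rw [tt_apply]
  rcases eq_or_ne j 0 with rfl | hj
  · simp
  · rw [if_neg ?_, if_neg hj]
    push_neg
    constructor
    · intro h1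
      have hle : p ≤ p ^ j := Nat.le_self_pow hj p
      have := hp.two_le
      omega
    · intro h3
      have hpd : p ∣ 3 := h3 ▸ dvd_pow_self p hj
      exact hp3 ((Nat.prime_dvd_prime_iff_eq hp (by norm_num)).mp hpd)

lemma uu_pp_ne3 {p : ℕ} (hp : p.Prime) (hp3 : p ≠ 3) (j : ℕ) :
    uu (p ^ j) = if j = 0 then 1 else 0 := by
  rw [uu_apply]
  rcases eq_or_ne j 0 with rfl | hj
  · simp
  · rw [if_neg ?_, if_neg ?_, if_neg hj]
    · intro h27
      have hpd : p ∣ 27 := h27 ▸ dvd_pow_self p hj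
      have : p ∣ 3 := hp.dvd_of_dvd_pow (n := 3) (by norm_num [hpd])
      exact hp3 ((Nat.prime_dvd_prime_iff_eq hp (by norm_num)).mp this)
    · intro h1
      have hle : p ≤ p ^ j := Nat.le_self_pow hj p
      have := hp.two_le
      omega

lemma tt_3pow (j : ℕ) : tt (3 ^ j) = if j ≤ 1 then 1 else 0 := by
  rw [tt_apply]
  match j with
  | 0 => norm_num
  | 1 => norm_num
  | (k + 2) =>
    have h9 : 9 ≤ 3 ^ (k + 2) := by
      calc (9 : ℕ) = 3 ^ 2 := by norm_num
      _ ≤ 3 ^ (k + 2) := Nat.pow_le_pow_right (by norm_num) (by omega)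
    rw [if_neg (by omega), if_neg (by omega)]

lemma uu_3pow (j : ℕ) : uu (3 ^ j) = if j = 0 then 1 else if j = 3 then -1 else 0 := by
  rw [uu_apply]
  match j with
  | 0 => norm_num
  | 1 => norm_num
  | 2 => norm_num
  | 3 => norm_num
  | (k + 4) =>
    have h81 : 81 ≤ 3 ^ (k + 4) := by
      calc (81 : ℕ) = 3 ^ 4 := by norm_num
      _ ≤ 3 ^ (k + 4) := Nat.pow_le_pow_right (by norm_num) (by omega)
    rw [if_neg (by omega), if_neg (by omega), if_neg (by omega), if_neg (by omega)]

lemma sum_delta_last (g : ℕ → ℂ) (e : ℕ) :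
    ∑ i ∈ range (e + 1), g i * (if e - i = 0 then 1 else 0) = g e := by
  rw [Finset.sum_eq_single_of_mem e (by simp)]
  · simp
  · intro i hi hne
    have := Finset.mem_range.mp hi
    rw [if_neg (by omega), mul_zero]

lemma sum_tt_ne3 {p : ℕ} (hp : p.Prime) (hp3 : p ≠ 3) (g : ℕ → ℂ) (e : ℕ) :
    ∑ i ∈ range (e + 1), g i * tt (p ^ (e - i)) = g e := by
  simp only [tt_pp_ne3 hp hp3]
  exact sum_delta_last g e

lemma sum_uu_ne3 {p : ℕ} (hp : p.Prime) (hp3 : p ≠ 3) (g : ℕ → ℂ) (e : ℕ) :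
    ∑ i ∈ range (e + 1), g i * uu (p ^ (e - i)) = g e := by
  simp only [uu_pp_ne3 hp hp3]
  exact sum_delta_last g e

lemma sum_tt3 (g : ℕ → ℂ) (e : ℕ) :
    ∑ i ∈ range (e + 1), g i * tt (3 ^ (e - i)) =
      g e + (if 1 ≤ e then g (e - 1) else 0) := by
  simp only [tt_3pow]
  match e with
  | 0 => simp
  | (n + 1) =>
    rw [Finset.sum_range_succ, Finset.sum_range_succ,
      Finset.sum_eq_zero (fun i hi => by
        have := Finset.mem_range.mp hi
        rw [if_neg (by omega), mul_zero]), zero_add]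
    have h1 : n + 1 - n = 1 := by omega
    have h2 : n + 1 - (n + 1) = 0 := by omega
    rw [h1, h2, if_pos (show (1:ℕ) ≤ 1 by norm_num), if_pos (show (0:ℕ) ≤ 1 by norm_num),
      if_pos (show 1 ≤ n + 1 by omega), Nat.add_sub_cancel]
    ring

lemma sum_uu3 (g : ℕ → ℂ) (e : ℕ) :
    ∑ i ∈ range (e + 1), g i * uu (3 ^ (e - i)) =
      g e - (if 3 ≤ e then g (e - 3) else 0) := by
  simp only [uu_3pow]
  match e with
  | 0 => simp
  | 1 => simp [Finset.sum_range_succ]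
  | 2 => simp [Finset.sum_range_succ]
  | (n + 3) =>
    rw [Finset.sum_range_succ, Finset.sum_range_succ, Finset.sum_range_succ,
      Finset.sum_range_succ,
      Finset.sum_eq_zero (fun i hi => by
        have := Finset.mem_range.mp hi
        rw [if_neg (by omega), if_neg (by omega), mul_zero]), zero_add]
    have e0 : n + 3 - n = 3 := by omega
    have e1 : n + 3 - (n + 1) = 2 := by omega
    have e2 : n + 3 - (n + 2) = 1 := by omega
    have e3 : n + 3 - (n + 3) = 0 := by omega
    have e4 : n + 3 - 3 = n := by omega
    rw [e0, e1, e2, e3, if_pos (show 3 ≤ n + 3 by omega), e4,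
      if_neg (show ¬(3:ℕ) = 0 by norm_num), if_pos (show (3:ℕ) = 3 from rfl),
      if_neg (show ¬(2:ℕ) = 0 by norm_num), if_neg (show ¬(2:ℕ) = 3 by norm_num),
      if_neg (show ¬(1:ℕ) = 0 by norm_num), if_neg (show ¬(1:ℕ) = 3 by norm_num),
      if_pos (show (0:ℕ) = 0 from rfl)]
    ring

lemma card_mod6 {r : ℕ} (hr : r < 6) (n : ℕ) :
    ((range n).filter (fun i => i % 6 = r)).card = (n + 5 - r) / 6 := by
  induction n with
  | zero => simp; omega
  | succ n ih =>
    rw [Finset.range_add_one, Finset.filter_insert]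
    by_cases h : n % 6 = r
    · rw [if_pos h, Finset.card_insert_of_notMem (by simp), ih]
      omega
    · rw [if_neg h, ih]
      omega

lemma count_G (e : ℕ) :
    ((range (e + 1)).filter (fun i => i % 3 ≠ 2 ∧ 2 ∣ (e - i))).card = e / 3 + 1 := by
  by_cases he : e % 2 = 0
  · rw [Finset.filter_congr (fun i hi => (by
        have := Finset.mem_range.mp hi
        omega : (i % 3 ≠ 2 ∧ 2 ∣ (e - i)) ↔ (i % 6 = 0 ∨ i % 6 = 4))),
      Finset.filter_or,
      Finset.card_union_of_disjoint
        (Finset.disjoint_filter.mpr (fun x _ h1 h2 => by omega)),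
      card_mod6 (by omega), card_mod6 (by omega)]
    obtain ⟨q, r, hr, rfl⟩ : ∃ q r, r < 6 ∧ e = 6 * q + r :=
      ⟨e / 6, e % 6, Nat.mod_lt _ (by norm_num), (Nat.div_add_mod e 6).symm⟩
    interval_cases r <;> omega
  · rw [Finset.filter_congr (fun i hi => (by
        have := Finset.mem_range.mp hi
        omega : (i % 3 ≠ 2 ∧ 2 ∣ (e - i)) ↔ (i % 6 = 1 ∨ i % 6 = 3))),
      Finset.filter_or,
      Finset.card_union_of_disjoint
        (Finset.disjoint_filter.mpr (fun x _ h1 h2 => by omega)),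
      card_mod6 (by omega), card_mod6 (by omega)]
    obtain ⟨q, r, hr, rfl⟩ : ∃ q r, r < 6 ∧ e = 6 * q + r :=
      ⟨e / 6, e % 6, Nat.mod_lt _ (by norm_num), (Nat.div_add_mod e 6).symm⟩
    interval_cases r <;> omega

lemma count_H (e : ℕ) :
    ((range (e + 1)).filter (fun i => 3 ∣ (e - i))).card = e / 3 + 1 := by
  rw [Finset.filter_congr (fun i hi => (by
        have := Finset.mem_range.mp hi
        omega : (3 ∣ (e - i)) ↔ (i % 6 = e % 3 ∨ i % 6 = e % 3 + 3))),
    Finset.filter_or,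
    Finset.card_union_of_disjoint
      (Finset.disjoint_filter.mpr (fun x _ h1 h2 => by omega)),
    card_mod6 (by omega), card_mod6 (by omega)]
  obtain ⟨q, r, hr, rfl⟩ : ∃ q r, r < 6 ∧ e = 6 * q + r :=
    ⟨e / 6, e % 6, Nat.mod_lt _ (by norm_num), (Nat.div_add_mod e 6).symm⟩
  interval_cases r <;> omega

lemma G_pp_ne3 {p : ℕ} (hp : p.Prime) (hp3 : p ≠ 3) (e : ℕ) :
    (Fc * pw 2) (p ^ e) = ((e / 3 + 1 : ℕ) : ℂ) := by
  rw [mul_apply_pp _ _ hp]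
  have hstep : ∀ i ∈ range (e + 1),
      Fc (p ^ i) * pw 2 (p ^ (e - i)) =
        if (i % 3 ≠ 2 ∧ 2 ∣ (e - i)) then 1 else 0 := by
    intro i hi
    rw [Fc_pp hp, pw_pp hp two_ne_zero]
    by_cases h1 : i % 3 ≠ 2 <;> by_cases h2 : 2 ∣ (e - i) <;> simp [h1, h2, hp3]
  rw [Finset.sum_congr rfl hstep, Finset.sum_boole, count_G]

lemma G_pp3 (e : ℕ) :
    (Fc * pw 2) (3 ^ e) = if 2 ∣ e then 1 else 0 := by
  rw [mul_apply_pp _ _ (by norm_num)]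
  have h1 : ∀ i : ℕ, Fc (3 ^ i) = if i = 0 then 1 else 0 := fun i => by
    rw [Fc_pp (by norm_num)]
    by_cases h : i = 0 <;> simp [h]
  rw [Finset.sum_eq_single_of_mem 0 (by simp)]
  · rw [h1, if_pos rfl, one_mul, Nat.sub_zero, pw_pp (by norm_num) two_ne_zero]
  · intro i hi hne
    rw [h1, if_neg hne, zero_mul]

lemma H_pp {p : ℕ} (hp : p.Prime) (e : ℕ) :
    ((ζ : ArithmeticFunction ℂ) * pw 3) (p ^ e) = ((e / 3 + 1 : ℕ) : ℂ) := by
  rw [mul_apply_pp _ _ hp]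
  have hstep : ∀ i ∈ range (e + 1),
      (ζ : ArithmeticFunction ℂ) (p ^ i) * pw 3 (p ^ (e - i)) =
        if 3 ∣ (e - i) then 1 else 0 := by
    intro i hi
    rw [natCoe_apply, zeta_apply, if_neg (pow_ne_zero i hp.pos.ne'),
      pw_pp hp three_ne_zero]
    simp
  rw [Finset.sum_congr rfl hstep, Finset.sum_boole, count_H]

lemma key_identity :
    (Fc * pw 2) * tt = ((ζ : ArithmeticFunction ℂ) * pw 3) * uu := by
  rw [ArithmeticFunction.IsMultiplicative.eq_iff_eq_on_prime_powers _
    ((Fc_mult.mul (pw_mult 2)).mul tt_mult) _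
    (((isMultiplicative_zeta.natCast).mul (pw_mult 3)).mul uu_mult)]
  intro p e hp
  rcases eq_or_ne p 3 with rfl | hp3
  · rw [mul_apply_pp _ _ hp, mul_apply_pp _ _ hp, sum_tt3, sum_uu3]
    rw [G_pp3, G_pp3, H_pp hp, H_pp hp]
    have hR : (((e / 3 + 1 : ℕ)) : ℂ) -
        (if 3 ≤ e then (((e - 3) / 3 + 1 : ℕ) : ℂ) else 0) = 1 := by
      by_cases h3 : 3 ≤ e
      · rw [if_pos h3]
        have h : e / 3 + 1 = ((e - 3) / 3 + 1) + 1 := by omega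
        rw [h]
        push_cast
        ring
      · rw [if_neg h3]
        have h : e / 3 + 1 = 1 := by omega
        rw [h]
        norm_num
    have hL : (if 2 ∣ e then (1 : ℂ) else 0) +
        (if 1 ≤ e then (if 2 ∣ (e - 1) then (1 : ℂ) else 0) else 0) = 1 := by
      rcases Nat.eq_zero_or_pos e with rfl | he
      · norm_num
      · rw [if_pos (show 1 ≤ e by omega)]
        by_cases h2 : 2 ∣ e
        · rw [if_pos h2, if_neg (by omega), add_zero]
        · rw [if_neg h2, if_pos (by omega), zero_add]
    rw [hL, hR]
  · rw [mul_apply_pp _ _ hp, mul_apply_pp _ _ hp, sum_tt_ne3 hp hp3,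
      sum_uu_ne3 hp hp3, G_pp_ne3 hp hp3, H_pp hp]

lemma summable_of_le_one {f : ℕ → ℂ} (hf : ∀ n, ‖f n‖ ≤ 1) {s : ℂ} (hs : 1 < s.re) :
    LSeriesSummable f s :=
  LSeriesSummable_of_abscissaOfAbsConv_lt_re <|
    (LSeries.abscissaOfAbsConv_le_of_le_const ⟨1, fun n _ => hf n⟩).trans_lt
      (by exact_mod_cast hs)

lemma Fc_le_one (n : ℕ) : ‖Fc n‖ ≤ 1 := by
  rw [Fc_apply]; split_ifs <;> norm_num

lemma pw_le_one (r n : ℕ) : ‖pw r n‖ ≤ 1 := by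
  rw [pw_apply]; split_ifs <;> norm_num

lemma tt_le_one (n : ℕ) : ‖tt n‖ ≤ 1 := by
  rw [tt_apply]; split_ifs <;> norm_num

lemma uu_le_one (n : ℕ) : ‖uu n‖ ≤ 1 := by
  rw [uu_apply]; split_ifs <;> norm_num

lemma zetaC_le_one (n : ℕ) : ‖(ζ : ArithmeticFunction ℂ) n‖ ≤ 1 := by
  rw [natCoe_apply, zeta_apply]; split_ifs <;> norm_num

lemma LSeries_pw {r : ℕ} (hr : r ≠ 0) {s : ℂ} (hrs : 1 < ((r : ℂ) * s).re) :
    LSeries (↗(pw r)) s = riemannZeta ((r : ℂ) * s) := by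
  have hs0 : (r : ℂ) * s ≠ 0 := by
    intro h
    rw [h] at hrs
    simp at hrs
    linarith
  rw [zeta_eq_tsum_one_div_nat_cpow hrs, LSeries]
  have hinj : Function.Injective (fun n : ℕ => n ^ r) :=
    Nat.pow_left_injective hr  -- might need nonzero vs one_le
  have hsupp : Function.support (fun k => LSeries.term (↗(pw r)) s k) ⊆
      Set.range (fun n : ℕ => n ^ r) := by
    intro k hk
    rcases eq_or_ne k 0 with rfl | hk0
    · simp [LSeries.term_zero] at hk
    · rw [Function.mem_support, LSeries.term_of_ne_zero hk0] at hk
      have hp : pw r k ≠ 0 := by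
        intro h0
        rw [h0] at hk
        simp at hk
      rw [pw_apply] at hp
      by_cases hc : k ≠ 0 ∧ ∃ m, k = m ^ r
      · obtain ⟨-, m, rfl⟩ := hc
        exact ⟨m, rfl⟩
      · rw [if_neg hc] at hp
        exact absurd rfl hp
  rw [← Function.Injective.tsum_eq hinj hsupp]
  refine tsum_congr fun n => ?_
  rcases eq_or_ne n 0 with rfl | hn
  · rw [Nat.cast_zero, Complex.zero_cpow hs0]
    simp [LSeries.term_zero, zero_pow hr]
  · have hnr : n ^ r ≠ 0 := pow_ne_zero r hn
    rw [LSeries.term_of_ne_zero hnr, pw_apply, if_pos ⟨hnr, n, rfl⟩]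
    congr 1
    rw [Complex.natCast_cpow_natCast_mul, Nat.cast_pow]

lemma LSeries_tt {s : ℂ} : LSeries (↗tt) s = 1 + (3 : ℂ) ^ (-s) := by
  rw [LSeries, tsum_eq_sum (s := ({1, 3} : Finset ℕ)) ?_]
  · rw [Finset.sum_insert (by norm_num), Finset.sum_singleton,
      LSeries.term_of_ne_zero one_ne_zero, LSeries.term_of_ne_zero (by norm_num : (3:ℕ) ≠ 0),
      tt_apply, tt_apply, if_pos (Or.inl rfl), if_pos (Or.inr rfl), Nat.cast_one,
      Complex.one_cpow, Complex.cpow_neg]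
    norm_num
  · intro b hb
    rcases eq_or_ne b 0 with rfl | hb0
    · exact LSeries.term_zero ..
    · rw [LSeries.term_of_ne_zero hb0, tt_apply, if_neg, zero_div]
      simp only [Finset.mem_insert, Finset.mem_singleton] at hb
      push_neg at hb ⊢
      exact hb

lemma LSeries_uu {s : ℂ} : LSeries (↗uu) s = 1 - (27 : ℂ) ^ (-s) := by
  rw [LSeries, tsum_eq_sum (s := ({1, 27} : Finset ℕ)) ?_]
  · rw [Finset.sum_insert (by norm_num), Finset.sum_singleton,
      LSeries.term_of_ne_zero one_ne_zero, LSeries.term_of_ne_zero (by norm_num : (27:ℕ) ≠ 0),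
      uu_apply, uu_apply, if_pos rfl, if_neg (by norm_num), if_pos rfl, Nat.cast_one,
      Complex.one_cpow, Complex.cpow_neg]
    push_cast
    ring
  · intro b hb
    rcases eq_or_ne b 0 with rfl | hb0
    · exact LSeries.term_zero ..
    · simp only [Finset.mem_insert, Finset.mem_singleton] at hb
      push_neg at hb
      rw [LSeries.term_of_ne_zero hb0, uu_apply, if_neg hb.1, if_neg hb.2, zero_div]

lemma LSeries_zetaC {s : ℂ} (hs : 1 < s.re) :
    LSeries (↗(ζ : ArithmeticFunction ℂ)) s = riemannZeta s := by
  have h : (fun n => ((ζ : ArithmeticFunction ℂ) n : ℂ)) = fun n => ((ζ n : ℕ) : ℂ) := by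
    funext n
    rw [natCoe_apply]
  rw [show (LSeries (↗(ζ : ArithmeticFunction ℂ)) s) = LSeries (↗ζ) s by rw [h]]
  exact LSeries_zeta_eq_riemannZeta hs

end Tau3Aux

open Tau3Aux

theorem dirichlet_series_tau_not_div_three (s : ℂ) (hs : 1 < s.re) :
    ∑' k : ℕ, (if 0 < k ∧ Nat.gcd k 3 = 1 ∧ ¬ (3 ∣ k.divisors.card)
        then (1 : ℂ) / (k : ℂ) ^ s else 0) =
      riemannZeta s * riemannZeta (3 * s) / riemannZeta (2 * s) *
        ((1 - (27 : ℂ) ^ (-s)) / (1 + (3 : ℂ) ^ (-s))) := by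
  classical
  have h2s : 1 < ((2 : ℂ) * s).re := by
    have h : ((2 : ℂ) * s).re = 2 * s.re := by simp [Complex.mul_re]
    rw [h]; linarith
  have h3s : 1 < ((3 : ℂ) * s).re := by
    have h : ((3 : ℂ) * s).re = 3 * s.re := by simp [Complex.mul_re]
    rw [h]; linarith
  have hc2 : ((2 : ℕ) : ℂ) = (2 : ℂ) := by norm_num
  have hc3 : ((3 : ℕ) : ℂ) = (3 : ℂ) := by norm_num
  -- summability
  have hF : LSeriesSummable (↗Fc) s := summable_of_le_one Fc_le_one hs
  have hp2 : LSeriesSummable (↗(pw 2)) s := summable_of_le_one (pw_le_one 2) hs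
  have hp3 : LSeriesSummable (↗(pw 3)) s := summable_of_le_one (pw_le_one 3) hs
  have htt : LSeriesSummable (↗tt) s := summable_of_le_one tt_le_one hs
  have huu : LSeriesSummable (↗uu) s := summable_of_le_one uu_le_one hs
  have hz : LSeriesSummable (↗(ζ : ArithmeticFunction ℂ)) s :=
    summable_of_le_one zetaC_le_one hs
  -- the main product identity
  have hEq : LSeries (↗Fc) s * LSeries (↗(pw 2)) s * LSeries (↗tt) s =
      LSeries (↗(ζ : ArithmeticFunction ℂ)) s * LSeries (↗(pw 3)) s * LSeries (↗uu) s := by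
    rw [← ArithmeticFunction.LSeries_mul' hF hp2, ← ArithmeticFunction.LSeries_mul'
        (ArithmeticFunction.LSeriesSummable_mul hF hp2) htt,
      key_identity,
      ArithmeticFunction.LSeries_mul' (ArithmeticFunction.LSeriesSummable_mul hz hp3) huu,
      ArithmeticFunction.LSeries_mul' hz hp3]
  -- identify the individual L-series
  have hX : (∑' k : ℕ, (if 0 < k ∧ Nat.gcd k 3 = 1 ∧ ¬ (3 ∣ k.divisors.card)
      then (1 : ℂ) / (k : ℂ) ^ s else 0)) = LSeries (↗Fc) s := by
    rw [LSeries]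
    refine tsum_congr fun k => ?_
    rcases eq_or_ne k 0 with rfl | hk
    · rw [LSeries.term_zero, if_neg (by simp)]
    · rw [LSeries.term_of_ne_zero hk, Fc_apply]
      by_cases hc : Nat.gcd k 3 = 1 ∧ ¬ (3 ∣ k.divisors.card)
      · rw [if_pos hc, if_pos ⟨Nat.pos_of_ne_zero hk, hc⟩]
      · rw [if_neg hc, if_neg (fun hp => hc ⟨hp.2.1, hp.2.2⟩), zero_div]
  rw [LSeries_pw two_ne_zero (hc2 ▸ h2s), hc2] at hEq
  rw [LSeries_pw three_ne_zero (hc3 ▸ h3s), hc3] at hEq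
  rw [LSeries_tt, LSeries_uu, LSeries_zetaC hs] at hEq
  rw [hX]
  -- nonvanishing facts
  have hZ2 : riemannZeta ((2 : ℂ) * s) ≠ 0 := riemannZeta_ne_zero_of_one_lt_re h2s
  have hT : (1 : ℂ) + (3 : ℂ) ^ (-s) ≠ 0 := by
    have habs : ‖(3 : ℂ) ^ (-s)‖ < 1 := by
      have h3 : ((3 : ℂ)) = ((3 : ℝ) : ℂ) := by norm_num
      rw [h3, Complex.norm_cpow_eq_rpow_re_of_pos (by norm_num)]
      have hre : (-s).re = -s.re := by simp
      rw [hre]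
      exact Real.rpow_lt_one_of_one_lt_of_neg (by norm_num) (by linarith)
    intro h
    have h31 : (3 : ℂ) ^ (-s) = -1 := by linear_combination h
    rw [h31] at habs
    simp at habs
  rw [div_mul_div_comm, eq_div_iff (mul_ne_zero hZ2 hT)]
  linear_combination hEq
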